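/- Let X be uniformly distributed on {2,...,n}. Then the generalization error L_n(h_2) = P(h_2(X) ≠ r(X)) satisfies |L_n(h_2) − 1/2| ≤ (3/2 + π(n))/(n−1), where r(x)=1 iff x prime and h_2(x)=0 iff 2 ∣ x and x > 2. In particular L_n(h_2) → 1/2 as n → ∞. -/

import Mathlib

open Finset Filter Nat


lemma sumPrimesTendsto :
    Tendsto (fun N : ℕ => ∑ p ∈ N.primesBelow, (1 : ℝ) / p) atTop atTop := by
  have hnn : ∀ n, 0 ≤ Set.indicator {p : ℕ | p.Prime} (fun n => (1:ℝ)/n) n :=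
    fun n => Set.indicator_nonneg (fun _ _ => by positivity) n
  have h := (not_summable_iff_tendsto_nat_atTop_of_nonneg hnn).mp not_summable_one_div_on_primes
  refine h.congr fun N => ?_
  rw [Nat.primesBelow, Finset.sum_filter]
  refine Finset.sum_congr rfl fun i _ => ?_
  by_cases hi : i.Prime <;> simp [Set.indicator_apply, hi]

lemma smallTotient {ε : ℝ} (hε : 0 < ε) : ∃ a : ℕ, 0 < a ∧ (a.totient : ℝ) < ε * a := by
  have h0 := Real.tendsto_exp_neg_atTop_nhds_zero.comp sumPrimesTendsto
  obtain ⟨N, hN⟩ := (h0.eventually (gt_mem_nhds hε)).exists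
  simp only [Function.comp] at hN
  refine ⟨∏ p ∈ N.primesBelow, p, Finset.prod_pos fun p hp => (prime_of_mem_primesBelow hp).pos, ?_⟩
  set a := ∏ p ∈ N.primesBelow, p with ha
  have hpf : a.primeFactors = N.primesBelow :=
    Nat.primeFactors_prod fun p hp => prime_of_mem_primesBelow hp
  have hq := Nat.totient_eq_mul_prod_factors a
  have hr : (a.totient : ℝ) = a * ∏ p ∈ N.primesBelow, (1 - (p : ℝ)⁻¹) := by
    have := congrArg (fun q : ℚ => (q : ℝ)) hq
    push_cast at this
    rw [this, hpf]
  have hapos : (0:ℝ) < a := by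
    exact_mod_cast Finset.prod_pos fun p hp => (prime_of_mem_primesBelow hp).pos
  rw [hr]
  have hprod : ∏ p ∈ N.primesBelow, (1 - (p : ℝ)⁻¹) ≤
      Real.exp (-∑ p ∈ N.primesBelow, (1:ℝ)/p) := by
    have : (-∑ p ∈ N.primesBelow, (1:ℝ)/p) = ∑ p ∈ N.primesBelow, (-(1/(p:ℝ))) := by
      rw [← Finset.sum_neg_distrib]
    rw [this, Real.exp_sum]
    refine Finset.prod_le_prod (fun p hp => ?_) (fun p hp => ?_)
    · have hp2 := (prime_of_mem_primesBelow hp).two_le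
      have : (p:ℝ)⁻¹ ≤ 1 := by
        rw [inv_le_one_iff₀]; right; exact_mod_cast le_trans one_le_two hp2
      linarith
    · have := Real.add_one_le_exp (-(1/(p:ℝ)))
      rw [one_div] at this ⊢
      linarith
  calc (a:ℝ) * ∏ p ∈ N.primesBelow, (1 - (p : ℝ)⁻¹)
      ≤ a * Real.exp (-∑ p ∈ N.primesBelow, (1:ℝ)/p) := by
        exact mul_le_mul_of_nonneg_left hprod hapos.le
    _ < a * ε := by exact (mul_lt_mul_iff_right₀ hapos).mpr hN
    _ = ε * a := mul_comm _ _

lemma densityZero :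
    Tendsto (fun n : ℕ => (Nat.primeCounting n : ℝ) / n) atTop (nhds 0) := by
  rw [Metric.tendsto_atTop]
  intro ε hε
  obtain ⟨a, ha, hta⟩ := smallTotient (half_pos hε)
  set C : ℝ := (Nat.primeCounting' (a+1) : ℝ) + a.totient with hC
  have hC0 : 0 ≤ C := by positivity
  obtain ⟨M, hM⟩ := exists_nat_gt (max ((a:ℝ)+1) (2*C/ε + 1))
  refine ⟨M, fun n hn => ?_⟩
  have hnM : ((M:ℝ)) ≤ n := by exact_mod_cast hn
  have hna : (a:ℝ) + 1 < n := lt_of_le_of_lt (le_max_left _ _) (lt_of_lt_of_le hM hnM)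
  have hna' : a ≤ n := by
    have : (a:ℝ) ≤ n := by linarith
    exact_mod_cast this
  have hnpos : (0:ℝ) < n := by linarith [ha.le, (Nat.cast_nonneg a : (0:ℝ) ≤ a)]
  -- the key bound
  have hb := Nat.primeCounting'_add_le (a := a) (k := a+1) ha.ne' (lt_add_one a) (n - a)
  have hsplit : (a + 1) + (n - a) = n + 1 := by omega
  rw [hsplit] at hb
  have hbR : (Nat.primeCounting n : ℝ) ≤ C + ((a.totient : ℝ)/a) * n := by
    have h1 : (Nat.primeCounting n : ℝ) ≤ (Nat.primeCounting' (a+1) : ℝ)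
        + (a.totient : ℝ) * (((n-a)/a : ℕ) + 1) := by
      have : Nat.primeCounting n = Nat.primeCounting' (n+1) := rfl
      rw [this]; exact_mod_cast hb
    have h2 : (((n-a)/a : ℕ) : ℝ) ≤ (n:ℝ)/a := by
      calc (((n-a)/a : ℕ) : ℝ) ≤ ((n-a:ℕ):ℝ)/a := Nat.cast_div_le
        _ ≤ (n:ℝ)/a := by
            gcongr
            exact_mod_cast Nat.sub_le n a
    have hA : (0:ℝ) < a := by exact_mod_cast ha
    have ht0 : (0:ℝ) ≤ (a.totient : ℝ) := Nat.cast_nonneg _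
    calc (Nat.primeCounting n : ℝ)
        ≤ (Nat.primeCounting' (a+1) : ℝ) + (a.totient : ℝ) * (((n-a)/a : ℕ) + 1) := h1
      _ ≤ (Nat.primeCounting' (a+1) : ℝ) + (a.totient : ℝ) * ((n:ℝ)/a + 1) := by
          gcongr
      _ = C + ((a.totient : ℝ)/a) * n := by rw [hC]; field_simp; ring
  -- conclude
  have hMC : 2*C/ε + 1 < (n:ℝ) := lt_of_le_of_lt (le_max_right _ _) (lt_of_lt_of_le hM hnM)
  have hA : (0:ℝ) < a := by exact_mod_cast ha
  have hd1 : C/(n:ℝ) < ε/2 := by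
    rw [div_lt_iff₀ hnpos]
    have e1 : ε * (2*C/ε) = 2*C := by field_simp
    have e2 := mul_lt_mul_of_pos_left hMC hε
    nlinarith
  have hd2 : (a.totient : ℝ)/a < ε/2 := by
    rw [div_lt_iff₀ hA]
    linarith
  rw [Real.dist_eq, sub_zero, abs_of_nonneg (by positivity), div_lt_iff₀ hnpos]
  have hc1 : C < ε/2 * n := (div_lt_iff₀ hnpos).mp hd1
  have hc2 := mul_lt_mul_of_pos_right hd2 hnpos
  linarith


/-- The generalization error of `h_2` under the uniform distribution on `{2,…,n}`, i.e. the
proportion of `x ∈ {2,…,n}` with `h_2(x) ≠ r(x)`, where `h_2(x) = 0` iff `2 ∣ x ∧ x > 2`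
and `r(x) = 1` iff `x` is prime. -/
noncomputable def L2 (n : ℕ) : ℝ :=
  (((Finset.Icc 2 n).filter
      (fun x => (if 2 ∣ x ∧ 2 < x then (0 : ℕ) else 1) ≠ (if x.Prime then 1 else 0))).card : ℝ)
    / ((n : ℝ) - 1)

lemma cardOdds (n : ℕ) (hn : 2 ≤ n) :
    ((Finset.Icc 2 n).filter (fun x => ¬ 2 ∣ x)).card = n - n/2 - 1 := by
  classical
  have h1 : Finset.Icc 2 n = (Finset.Ioc 0 n).erase 1 := by
    ext x; simp only [Finset.mem_Icc, Finset.mem_erase, Finset.mem_Ioc]; omega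
  rw [h1, Finset.filter_erase, Finset.card_erase_of_mem]
  · have hsplit := Finset.card_filter_add_card_filter_not
      (s := Finset.Ioc 0 n) (p := fun x => 2 ∣ x)
    have hdvd : ((Finset.Ioc 0 n).filter (fun x => 2 ∣ x)).card = n / 2 :=
      Nat.Ioc_filter_dvd_card_eq_div n 2
    have hcard : (Finset.Ioc 0 n).card = n := by simp
    omega
  · simp only [Finset.mem_filter, Finset.mem_Ioc]
    exact ⟨⟨one_pos, by omega⟩, by omega⟩

lemma cardBounds (n : ℕ) (hn : 2 ≤ n) :
    ((n:ℝ)/2 - 1 - Nat.primeCounting n ≤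
      (((Finset.Icc 2 n).filter
        (fun x => (if 2 ∣ x ∧ 2 < x then (0 : ℕ) else 1) ≠ (if x.Prime then 1 else 0))).card : ℝ))
    ∧ ((((Finset.Icc 2 n).filter
        (fun x => (if 2 ∣ x ∧ 2 < x then (0 : ℕ) else 1) ≠ (if x.Prime then 1 else 0))).card : ℝ)
        ≤ ((n:ℝ)-1)/2) := by
  classical
  set E := (Finset.Icc 2 n).filter
      (fun x => (if 2 ∣ x ∧ 2 < x then (0 : ℕ) else 1) ≠ (if x.Prime then 1 else 0)) with hE
  set O := (Finset.Icc 2 n).filter (fun x => ¬ 2 ∣ x) with hO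
  -- E ⊆ O
  have hEO : E ⊆ O := by
    intro x hx
    rw [hE, Finset.mem_filter] at hx
    rw [hO, Finset.mem_filter]
    refine ⟨hx.1, ?_⟩
    intro hdvd
    rcases hx with ⟨hmem, hne⟩
    rw [Finset.mem_Icc] at hmem
    rcases eq_or_lt_of_le hmem.1 with h2 | h2
    · apply hne; rw [← h2]; norm_num
    · have hnp : ¬ x.Prime := by
        intro hp
        have := (Nat.Prime.even_iff hp).mp (even_iff_two_dvd.mpr hdvd)
        omega
      apply hne; simp [hdvd, h2, hnp]
  -- O ⊆ E ∪ primes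
  have hOE : O ⊆ E ∪ (n+1).primesBelow := by
    intro x hx
    rw [hO, Finset.mem_filter] at hx
    rcases hx with ⟨hmem, hodd⟩
    have hx2 : 2 ≤ x ∧ x ≤ n := Finset.mem_Icc.mp hmem
    by_cases hp : x.Prime
    · exact Finset.mem_union_right _ (Nat.mem_primesBelow.mpr ⟨by omega, hp⟩)
    · apply Finset.mem_union_left
      rw [hE, Finset.mem_filter]
      refine ⟨hmem, ?_⟩
      have : ¬ (2 ∣ x ∧ 2 < x) := fun h => hodd h.1
      simp [this, hp]
  have hπ : ((n+1).primesBelow).card = Nat.primeCounting n := by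
    rw [Nat.primesBelow_card_eq_primeCounting']; rfl
  have hOcard : O.card = n - n/2 - 1 := cardOdds n hn
  have hle : O.card ≤ E.card + Nat.primeCounting n := by
    calc O.card ≤ (E ∪ (n+1).primesBelow).card := Finset.card_le_card hOE
      _ ≤ E.card + ((n+1).primesBelow).card := Finset.card_union_le _ _
      _ = E.card + Nat.primeCounting n := by rw [hπ]
  have hEle : E.card ≤ O.card := Finset.card_le_card hEO
  -- numeric facts
  have hhalf : n/2 + n/2 + 1 ≥ n ∧ n/2 + n/2 ≤ n ∧ n/2 + 1 ≤ n := by omega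
  constructor
  · have h1 : (O.card : ℝ) ≤ E.card + Nat.primeCounting n := by exact_mod_cast hle
    have h2 : ((n:ℝ))/2 - 1 ≤ (O.card : ℝ) := by
      rw [hOcard]
      have : (n - n/2 - 1 : ℕ) = n - n/2 - 1 := rfl
      have hc : ((n - n/2 - 1 : ℕ) : ℝ) = (n:ℝ) - (n/2 : ℕ) - 1 := by
        have : n/2 + 1 ≤ n := by omega
        push_cast [Nat.sub_sub]
        rw [Nat.cast_sub (by omega)]
        push_cast; ring
      rw [hc]
      have : ((n/2 : ℕ) : ℝ) ≤ (n:ℝ)/2 := Nat.cast_div_le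
      linarith
    linarith
  · have h2 : (E.card : ℝ) ≤ (O.card : ℝ) := by exact_mod_cast hEle
    have h3 : (O.card : ℝ) ≤ ((n:ℝ)-1)/2 := by
      rw [hOcard]
      have hc : ((n - n/2 - 1 : ℕ) : ℝ) = (n:ℝ) - (n/2 : ℕ) - 1 := by
        push_cast [Nat.sub_sub]
        rw [Nat.cast_sub (by omega)]
        push_cast; ring
      rw [hc]
      have : (n:ℝ)/2 - 1/2 ≤ ((n/2 : ℕ) : ℝ) := by
        have h4 : n ≤ 2 * (n/2) + 1 := by omega
        have : (n:ℝ) ≤ 2 * ((n/2 : ℕ):ℝ) + 1 := by exact_mod_cast h4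
        linarith
      linarith
    linarith


open Finset Filter Nat in
/-- `|L_n(h_2) - 1/2| ≤ (3/2 + π(n))/(n-1)` for `n ≥ 2`; in particular `L_n(h_2) → 1/2`. -/
theorem stmt11 :
    (∀ n : ℕ, 2 ≤ n →
        |L2 n - 1 / 2| ≤ (3 / 2 + (Nat.primeCounting n : ℝ)) / ((n : ℝ) - 1)) ∧
      Filter.Tendsto L2 Filter.atTop (nhds (1 / 2)) := by
  have h1 : ∀ n : ℕ, 2 ≤ n →
      |L2 n - 1 / 2| ≤ (3 / 2 + (Nat.primeCounting n : ℝ)) / ((n : ℝ) - 1) := by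
    intro n hn
    obtain ⟨hb1, hb2⟩ := cardBounds n hn
    have hπ0 : (0:ℝ) ≤ (Nat.primeCounting n : ℝ) := Nat.cast_nonneg _
    have hn2 : (2:ℝ) ≤ (n:ℝ) := by exact_mod_cast hn
    have hn1 : (0:ℝ) < (n:ℝ) - 1 := by linarith
    set cE : ℝ := (((Finset.Icc 2 n).filter
      (fun x => (if 2 ∣ x ∧ 2 < x then (0 : ℕ) else 1) ≠ (if x.Prime then 1 else 0))).card : ℝ)
      with hcE
    have key : |cE - ((n:ℝ)-1)/2| ≤ 3/2 + (Nat.primeCounting n : ℝ) :=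
      abs_le.mpr ⟨by linarith, by linarith⟩
    have hL : L2 n = cE / ((n:ℝ)-1) := rfl
    rw [hL]
    have e2 : (((n:ℝ)-1)/2)/((n:ℝ)-1) = 1/2 := by
      rw [div_right_comm, div_self (ne_of_gt hn1)]
    have heq : cE/((n:ℝ)-1) - 1/2 = (cE - ((n:ℝ)-1)/2)/((n:ℝ)-1) := by
      rw [sub_div, e2]
    rw [heq, abs_div, abs_of_pos hn1]
    gcongr
  refine ⟨h1, ?_⟩
  have hg : Tendsto (fun n : ℕ => (3/2 + (Nat.primeCounting n : ℝ))/((n:ℝ)-1))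
      atTop (nhds 0) := by
    have hA : Tendsto (fun n : ℕ => ((3:ℝ)/2 + (Nat.primeCounting n : ℝ))/(n:ℝ))
        atTop (nhds 0) := by
      have h32 : Tendsto (fun n : ℕ => (3:ℝ)/2/(n:ℝ)) atTop (nhds 0) :=
        tendsto_const_div_atTop_nhds_zero_nat (3/2)
      have := h32.add densityZero
      rw [add_zero] at this
      exact this.congr fun n => by rw [← _root_.add_div]
    have hsub : Tendsto (fun n : ℕ => (n:ℝ) - 1) atTop atTop := by
      have h := tendsto_atTop_add_const_right atTop (-1 : ℝ)
        (tendsto_natCast_atTop_atTop (R := ℝ))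
      exact h.congr fun n => by ring
    have hinv : Tendsto (fun n : ℕ => ((n:ℝ)-1)⁻¹) atTop (nhds 0) :=
      hsub.inv_tendsto_atTop
    have hB : Tendsto (fun n : ℕ => (n:ℝ)/((n:ℝ)-1)) atTop (nhds 1) := by
      have h1' := (tendsto_const_nhds (x := (1:ℝ)) (f := (atTop : Filter ℕ))).add hinv
      rw [add_zero] at h1'
      apply h1'.congr'
      filter_upwards [eventually_ge_atTop 2] with n hn
      have hn2 : (2:ℝ) ≤ (n:ℝ) := by exact_mod_cast hn
      have hne : ((n:ℝ)-1) ≠ 0 := by linarith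
      field_simp
      ring
    have hAB := hA.mul hB
    rw [zero_mul] at hAB
    apply hAB.congr'
    filter_upwards [eventually_ge_atTop 2] with n hn
    have hn2 : (2:ℝ) ≤ (n:ℝ) := by exact_mod_cast hn
    have hn0 : (n:ℝ) ≠ 0 := by linarith
    have hne : ((n:ℝ)-1) ≠ 0 := by linarith
    field_simp
  have hsq : Tendsto (fun n => L2 n - 1/2) atTop (nhds 0) := by
    apply squeeze_zero_norm' ?_ hg
    filter_upwards [eventually_ge_atTop 2] with n hn
    simpa [Real.norm_eq_abs] using h1 n hn
  exact tendsto_sub_nhds_zero_iff.mp hsq
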